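/- arXiv:2107.13582 — 2 statements merged into one kernel-verified Lean document; each statement's English description precedes it below -/
import Mathlib

section
/- Let N ≥ 1 and let u : ℝ^N → ℂ, Φ : ℝ^N → ℝ, and u_h : ℝ^N → ℂ be differentiable at a point x with |u_h(x)| = 1, and set w := u·e^{−iΦ}·conj(u_h) and γᵢ := u_h × ∂ᵢu_h. Then for every index i, w(x) × ∂ᵢw(x) = u(x) × ∂ᵢu(x) − ∂ᵢΦ(x) − γᵢ(x) + (1 − |u(x)|²)·(∂ᵢΦ(x) + γᵢ(x)), where z × w := Re(z)·Im(w) − Im(z)·Re(w) for z, w ∈ ℂ. -/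
/-- The cross product of two complex numbers: `z × w = Re(z)·Im(w) − Im(z)·Re(w)`. -/
def complexCross (z w : ℂ) : ℝ := z.re * w.im - z.im * w.re

/-- Gauge-transformation identity: with `w := u·e^{−iΦ}·conj(u_h)` and
`γᵢ := u_h × ∂ᵢu_h`, if `u`, `Φ`, `u_h` are differentiable at `x` and `|u_h(x)| = 1`, then
`w × ∂ᵢw = u × ∂ᵢu − ∂ᵢΦ − γᵢ + (1 − |u|²)(∂ᵢΦ + γᵢ)` at `x`. -/
theorem stmt_14 (N : ℕ) (hN : 1 ≤ N)
    (u : EuclideanSpace ℝ (Fin N) → ℂ) (Φ : EuclideanSpace ℝ (Fin N) → ℝ)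
    (uh : EuclideanSpace ℝ (Fin N) → ℂ) (x : EuclideanSpace ℝ (Fin N))
    (hu : DifferentiableAt ℝ u x) (hΦ : DifferentiableAt ℝ Φ x)
    (huh : DifferentiableAt ℝ uh x) (hmod : ‖uh x‖ = 1) (i : Fin N) :
    complexCross
        ((fun z => u z * Complex.exp (-(Φ z : ℂ) * Complex.I) * (starRingEnd ℂ) (uh z)) x)
        (fderiv ℝ (fun z => u z * Complex.exp (-(Φ z : ℂ) * Complex.I) * (starRingEnd ℂ) (uh z))
          x (EuclideanSpace.single i 1))
      = complexCross (u x) (fderiv ℝ u x (EuclideanSpace.single i 1))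
          - fderiv ℝ Φ x (EuclideanSpace.single i 1)
          - complexCross (uh x) (fderiv ℝ uh x (EuclideanSpace.single i 1))
          + (1 - ‖u x‖ ^ 2) * (fderiv ℝ Φ x (EuclideanSpace.single i 1)
              + complexCross (uh x) (fderiv ℝ uh x (EuclideanSpace.single i 1))) := by

  have hf : HasFDerivAt (fun z => -(Φ z : ℂ) * Complex.I)
      ((fderiv ℝ Φ x).smulRight (-Complex.I)) x := by
    have h := (hΦ.hasFDerivAt).smul_const (-Complex.I)
    simpa [Complex.real_smul, mul_neg, neg_mul] using h
  have hE := hf.cexp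
  have hC : HasFDerivAt (fun z => (starRingEnd ℂ) (uh z))
      ((Complex.conjCLE.toContinuousLinearMap).comp (fderiv ℝ uh x)) x :=
    (Complex.conjCLE.toContinuousLinearMap.hasFDerivAt).comp x huh.hasFDerivAt
  have hw : HasFDerivAt (fun z => u z * Complex.exp (-(Φ z : ℂ) * Complex.I) * (starRingEnd ℂ) (uh z)) _ x :=
    (hu.hasFDerivAt.mul hE).mul hC
  rw [hw.fderiv]
  have hE1 : (Complex.exp (-(Φ x : ℂ) * Complex.I)).re ^ 2
      + (Complex.exp (-(Φ x : ℂ) * Complex.I)).im ^ 2 = 1 := by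
    have : ‖Complex.exp (-(Φ x : ℂ) * Complex.I)‖ = 1 := by
      rw [Complex.norm_exp]; simp
    have h2 := Complex.sq_norm (Complex.exp (-(Φ x : ℂ) * Complex.I))
    rw [this] at h2
    rw [Complex.normSq_apply] at h2
    nlinarith
  have hH1 : (uh x).re ^ 2 + (uh x).im ^ 2 = 1 := by
    have h2 := Complex.sq_norm (uh x)
    rw [hmod, Complex.normSq_apply] at h2
    nlinarith
  have hU : ‖u x‖ ^ 2 = (u x).re ^ 2 + (u x).im ^ 2 := by
    have h2 := Complex.sq_norm (u x)
    rw [Complex.normSq_apply] at h2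
    nlinarith
  simp only [complexCross, ContinuousLinearMap.add_apply, ContinuousLinearMap.smul_apply,
    ContinuousLinearMap.coe_comp', Function.comp_apply, ContinuousLinearMap.smulRight_apply,
    ContinuousLinearEquiv.coe_coe, Complex.conjCLE_apply, smul_eq_mul, Complex.real_smul,
    Complex.ofReal_re, Complex.ofReal_im, Complex.add_re, Complex.add_im,
    Complex.mul_re, Complex.mul_im, Complex.conj_re,
    Complex.conj_im, Complex.neg_re, Complex.neg_im, Complex.I_re, Complex.I_im, hU, neg_mul, Pi.mul_apply]
  simp only [neg_mul] at hE1
  linear_combination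
    (((u x).re ^ 2 + (u x).im ^ 2) *
        ((uh x).im * ((fderiv ℝ uh x) (EuclideanSpace.single i 1)).re
          - (uh x).re * ((fderiv ℝ uh x) (EuclideanSpace.single i 1)).im)
      - ((u x).re ^ 2 + (u x).im ^ 2) * (fderiv ℝ Φ x (EuclideanSpace.single i 1))
          * ((uh x).re ^ 2 + (uh x).im ^ 2)
      + ((u x).re * ((fderiv ℝ u x) (EuclideanSpace.single i 1)).im
          - (u x).im * ((fderiv ℝ u x) (EuclideanSpace.single i 1)).re)
          * ((uh x).re ^ 2 + (uh x).im ^ 2)) * hE1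
    + (-(((u x).re ^ 2 + (u x).im ^ 2) * (fderiv ℝ Φ x (EuclideanSpace.single i 1)))
      + ((u x).re * ((fderiv ℝ u x) (EuclideanSpace.single i 1)).im
          - (u x).im * ((fderiv ℝ u x) (EuclideanSpace.single i 1)).re)) * hH1
end

section
/- Let N ≥ 3 be an integer and let 0 < a, b with 2a ≤ b. Define l : [0,∞) → [0,1] by l(s) = 0 for s ≤ a; l(s) = ((s/a)^{N−1} − 1)/(2^{N−1} − 1) for a ≤ s ≤ 2a; l(s) = 1 for 2a ≤ s ≤ b; l(s) = (2^{N−1} − (s/b)^{N−1})/(2^{N−1} − 1) for b ≤ s ≤ 2b; l(s) = 0 for s ≥ 2b. Define h(u,s) := ((N−1)(N−2)/(2^{N−1}−1))·(1 if 0 ≤ u ≤ s; 2 − u/s if s ≤ u ≤ 2s; 0 if u ≥ 2s). Then for every k ∈ L¹(B_{2b}(0)) on the Euclidean ball B_{2b}(0) ⊂ ℝ^N, ∫_{B_{2b}(0)} l(|y|)·|y|^{2−N}·k(y) dy = ∫_a^b s^{−1}·J_s^k ds + (N−2)^{−1}·(J_b^k − J_a^k), where J_s^k := s^{2−N}·∫_{B_{2s}(0)}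 k(y)·h(|y|,s) dy. -/
open MeasureTheory

/-- The radial cutoff `l` supported in `[a, 2b]`, equal to `1` on `[2a, b]`. -/
noncomputable def lProfile (N : ℕ) (a b : ℝ) (s : ℝ) : ℝ :=
  if s ≤ a then 0
  else if s ≤ 2 * a then ((s / a) ^ (N - 1) - 1) / ((2 : ℝ) ^ (N - 1) - 1)
  else if s ≤ b then 1
  else if s ≤ 2 * b then ((2 : ℝ) ^ (N - 1) - (s / b) ^ (N - 1)) / ((2 : ℝ) ^ (N - 1) - 1)
  else 0

/-- The averaging kernel `h(u,s)`. -/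
noncomputable def hProfile (N : ℕ) (u s : ℝ) : ℝ :=
  ((N : ℝ) - 1) * ((N : ℝ) - 2) / ((2 : ℝ) ^ (N - 1) - 1) *
    (if u ≤ s then 1 else if u ≤ 2 * s then 2 - u / s else 0)

namespace Stmt15

lemma rpow_two_sub {x n : ℝ} (hx : 0 < x) : x ^ ((2:ℝ) - n) = x * x ^ ((1:ℝ) - n) := by
  rw [show (2:ℝ) - n = 1 + (1 - n) by ring, Real.rpow_add hx, Real.rpow_one]

lemma rpow_negn {x n : ℝ} (hx : 0 < x) : x ^ (-n) = x⁻¹ * x ^ ((1:ℝ) - n) := by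
  rw [show -n = (-1) + (1 - n) by ring, Real.rpow_add hx, Real.rpow_neg_one]

lemma rpow_nm1 {x n : ℝ} (hx : 0 < x) : x ^ (n - 1) = (x ^ ((1:ℝ) - n))⁻¹ := by
  rw [show n - 1 = -(1 - n) by ring, Real.rpow_neg hx.le]

lemma Qpos {N : ℕ} (hN : 3 ≤ N) : (0:ℝ) < (2:ℝ) ^ (N - 1) - 1 := by
  have : (1:ℝ) < 2 ^ (N - 1) := one_lt_pow₀ (by norm_num) (by omega)
  linarith

lemma pow2_eq {N : ℕ} (hN : 3 ≤ N) :
    ((2:ℝ) ^ (N - 1) : ℝ) = (2:ℝ) ^ ((N:ℝ) - 1) := by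
  rw [← Real.rpow_natCast 2 (N - 1), Nat.cast_sub (by omega), Nat.cast_one]

lemma half_rpow {N : ℕ} (hN : 3 ≤ N) {u : ℝ} (hu : 0 < u) :
    (u / 2) ^ ((1:ℝ) - (N:ℝ)) = u ^ ((1:ℝ) - (N:ℝ)) * (2:ℝ) ^ (N - 1) := by
  rw [Real.div_rpow hu.le (by norm_num),
    div_eq_iff (by positivity : (2:ℝ) ^ ((1:ℝ) - (N:ℝ)) ≠ 0)]
  have h : ((2:ℝ) ^ (N - 1) : ℝ) * (2:ℝ) ^ ((1:ℝ) - (N:ℝ)) = 1 := by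
    rw [pow2_eq hN, ← Real.rpow_add (by norm_num),
      show (N:ℝ) - 1 + (1 - (N:ℝ)) = 0 by ring, Real.rpow_zero]
  rw [mul_assoc, h, mul_one]

lemma div_natpow_eq {N : ℕ} (hN : 3 ≤ N) {u x : ℝ} (hu : 0 < u) (hx : 0 < x) :
    ((u / x) ^ (N - 1) : ℝ) = (u ^ ((1:ℝ) - (N:ℝ)))⁻¹ * x ^ ((1:ℝ) - (N:ℝ)) := by
  rw [← Real.rpow_natCast (u / x) (N - 1), Nat.cast_sub (by omega), Nat.cast_one,
    Real.div_rpow hu.le hx.le, rpow_nm1 hu, rpow_nm1 hx]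
  rw [div_eq_mul_inv, inv_inv]

lemma Cv_nonneg {N : ℕ} (hN : 3 ≤ N) :
    0 ≤ ((N:ℝ) - 1) * ((N:ℝ) - 2) / ((2:ℝ) ^ (N - 1) - 1) := by
  have hn : (3:ℝ) ≤ (N:ℝ) := by exact_mod_cast hN
  exact div_nonneg (by nlinarith) (Qpos hN).le

lemma hProfile_abs_le {N : ℕ} (hN : 3 ≤ N) {u s : ℝ} (hu : 0 ≤ u) (hs : 0 < s) :
    |hProfile N u s| ≤ ((N:ℝ) - 1) * ((N:ℝ) - 2) / ((2:ℝ) ^ (N - 1) - 1) := by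
  have hC := Cv_nonneg hN
  unfold hProfile
  rw [abs_mul, abs_of_nonneg hC]
  have h01 : |if u ≤ s then (1:ℝ) else if u ≤ 2 * s then 2 - u / s else 0| ≤ 1 := by
    split_ifs with h h2
    · norm_num
    · rw [abs_of_nonneg (by rw [sub_nonneg, div_le_iff₀ hs]; linarith)]
      push_neg at h
      have : 1 ≤ u / s := (le_div_iff₀ hs).mpr (by linarith)
      linarith
    · norm_num
  calc _ ≤ ((N:ℝ) - 1) * ((N:ℝ) - 2) / ((2:ℝ) ^ (N - 1) - 1) * 1 :=
        mul_le_mul_of_nonneg_left h01 hC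
    _ = _ := mul_one _

lemma measurable_hProfile (N : ℕ) : Measurable fun p : ℝ × ℝ => hProfile N p.1 p.2 := by
  unfold hProfile
  apply Measurable.const_mul
  apply Measurable.ite (measurableSet_le measurable_fst measurable_snd) measurable_const
  apply Measurable.ite (measurableSet_le measurable_fst (measurable_const.mul measurable_snd))
    (measurable_const.sub (measurable_fst.div measurable_snd)) measurable_const

lemma hProfile_eq_zero {N : ℕ} {u s : ℝ} (hs : 0 < s) (h2s : 2 * s ≤ u) :
    hProfile N u s = 0 := by
  unfold hProfile
  split_ifs with h h2
  · linarith
  · have : u = 2 * s := le_antisymm h2 h2s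
    rw [this]
    have hz : 2 - 2 * s / s = 0 := by field_simp; norm_num
    rw [hz, mul_zero]
  · rw [mul_zero]

lemma int1 {n : ℝ} (hn : 3 ≤ n) {c d : ℝ} (hc : 0 < c) (hcd : c ≤ d) :
    ∫ s in c..d, s ^ ((1:ℝ) - n)
      = (d ^ ((2:ℝ) - n) - c ^ ((2:ℝ) - n)) / (2 - n) := by
  rw [integral_rpow (Or.inr ⟨by intro h; linarith, by
    rw [Set.uIcc_of_le hcd]; rintro ⟨h0, -⟩; linarith⟩)]
  rw [show (1:ℝ) - n + 1 = 2 - n by ring]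

lemma int0 {n : ℝ} (hn : 3 ≤ n) {c d : ℝ} (hc : 0 < c) (hcd : c ≤ d) :
    ∫ s in c..d, s ^ (-n)
      = (d ^ ((1:ℝ) - n) - c ^ ((1:ℝ) - n)) / (1 - n) := by
  rw [integral_rpow (Or.inr ⟨by intro h; linarith, by
    rw [Set.uIcc_of_le hcd]; rintro ⟨h0, -⟩; linarith⟩)]
  rw [show -n + 1 = 1 - n by ring]

lemma piece_one (N : ℕ) (hN : 3 ≤ N) {u c d : ℝ} (hu : 0 ≤ u) (hc : 0 < c)
    (hcd : c ≤ d) (huc : u ≤ c) :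
    ∫ s in c..d, s⁻¹ * (s ^ ((2:ℝ) - (N:ℝ)) * hProfile N u s)
      = ((N:ℝ) - 1) * ((N:ℝ) - 2) / ((2:ℝ) ^ (N - 1) - 1) *
          ((d ^ ((2:ℝ) - (N:ℝ)) - c ^ ((2:ℝ) - (N:ℝ))) / (2 - (N:ℝ))) := by
  have hn : (3:ℝ) ≤ (N:ℝ) := by exact_mod_cast hN
  have hcong : Set.EqOn (fun s => s⁻¹ * (s ^ ((2:ℝ) - (N:ℝ)) * hProfile N u s))
      (fun s => ((N:ℝ) - 1) * ((N:ℝ) - 2) / ((2:ℝ) ^ (N - 1) - 1) * s ^ ((1:ℝ) - (N:ℝ)))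
      (Set.uIcc c d) := by
    intro s hs
    rw [Set.uIcc_of_le hcd] at hs
    have hs0 : 0 < s := hc.trans_le hs.1
    simp only [hProfile, if_pos (huc.trans hs.1)]
    rw [rpow_two_sub hs0]
    have hQ := (Qpos hN).ne'
    field_simp
  rw [intervalIntegral.integral_congr hcong, intervalIntegral.integral_const_mul,
    int1 hn hc hcd]

lemma piece_two (N : ℕ) (hN : 3 ≤ N) {u c d : ℝ} (hu : 0 ≤ u) (hc : 0 < c)
    (hcd : c ≤ d) (hu2c : u ≤ 2 * c) (hdu : d ≤ u) :
    ∫ s in c..d, s⁻¹ * (s ^ ((2:ℝ) - (N:ℝ)) * hProfile N u s)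
      = ((N:ℝ) - 1) * ((N:ℝ) - 2) / ((2:ℝ) ^ (N - 1) - 1) *
          (2 * ((d ^ ((2:ℝ) - (N:ℝ)) - c ^ ((2:ℝ) - (N:ℝ))) / (2 - (N:ℝ)))
            - u * ((d ^ ((1:ℝ) - (N:ℝ)) - c ^ ((1:ℝ) - (N:ℝ))) / (1 - (N:ℝ)))) := by
  have hn : (3:ℝ) ≤ (N:ℝ) := by exact_mod_cast hN
  have hcong : Set.EqOn (fun s => s⁻¹ * (s ^ ((2:ℝ) - (N:ℝ)) * hProfile N u s))
      (fun s => ((N:ℝ) - 1) * ((N:ℝ) - 2) / ((2:ℝ) ^ (N - 1) - 1) *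
        (2 * s ^ ((1:ℝ) - (N:ℝ)) - u * s ^ (-(N:ℝ)))) (Set.uIcc c d) := by
    intro s hs
    rw [Set.uIcc_of_le hcd] at hs
    have hs0 : 0 < s := hc.trans_le hs.1
    have hsu : s ≤ u := hs.2.trans hdu
    have hu2s : u ≤ 2 * s := hu2c.trans (by linarith [hs.1])
    simp only [hProfile]
    have hQ := (Qpos hN).ne'
    by_cases h : u ≤ s
    · have heq : u = s := le_antisymm h hsu
      simp only [if_pos h]
      rw [heq, rpow_two_sub hs0, rpow_negn hs0]
      field_simp
      ring
    · simp only [if_neg h, if_pos hu2s]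
      rw [rpow_two_sub hs0, rpow_negn hs0]
      field_simp
  have h0 : (0:ℝ) ∉ Set.uIcc c d := by
    rw [Set.uIcc_of_le hcd]; rintro ⟨h0, -⟩; linarith
  have i1 : IntervalIntegrable (fun s : ℝ => s ^ ((1:ℝ) - (N:ℝ))) volume c d :=
    intervalIntegral.intervalIntegrable_rpow (Or.inr h0)
  have i0 : IntervalIntegrable (fun s : ℝ => s ^ (-(N:ℝ))) volume c d :=
    intervalIntegral.intervalIntegrable_rpow (Or.inr h0)
  rw [intervalIntegral.integral_congr hcong, intervalIntegral.integral_const_mul,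
    intervalIntegral.integral_sub (i1.const_mul 2) (i0.const_mul u),
    intervalIntegral.integral_const_mul, intervalIntegral.integral_const_mul,
    int1 hn hc hcd, int0 hn hc hcd]

lemma piece_zero (N : ℕ) {u c d : ℝ} (hc : 0 < c) (hcd : c ≤ d) (hdu : 2 * d ≤ u) :
    ∫ s in c..d, s⁻¹ * (s ^ ((2:ℝ) - (N:ℝ)) * hProfile N u s) = 0 := by
  have hcong : Set.EqOn (fun s => s⁻¹ * (s ^ ((2:ℝ) - (N:ℝ)) * hProfile N u s))
      (fun _ => (0:ℝ)) (Set.uIcc c d) := by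
    intro s hs
    rw [Set.uIcc_of_le hcd] at hs
    have hs0 : 0 < s := hc.trans_le hs.1
    simp only [hProfile_eq_zero hs0 (by linarith [hs.2] : 2 * s ≤ u), mul_zero]
  rw [intervalIntegral.integral_congr hcong, intervalIntegral.integral_zero]

lemma F_abs_le (N : ℕ) (hN : 3 ≤ N) {u s a : ℝ} (hu : 0 ≤ u) (ha : 0 < a) (has : a ≤ s) :
    |s⁻¹ * (s ^ ((2:ℝ) - (N:ℝ)) * hProfile N u s)|
      ≤ a⁻¹ * (a ^ ((2:ℝ) - (N:ℝ)) * (((N:ℝ) - 1) * ((N:ℝ) - 2) / ((2:ℝ) ^ (N - 1) - 1))) := by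
  have hs : 0 < s := ha.trans_le has
  have hn : (3:ℝ) ≤ (N:ℝ) := by exact_mod_cast hN
  rw [abs_mul, abs_mul, abs_inv, abs_of_pos hs, abs_of_pos (Real.rpow_pos_of_pos hs _)]
  have h1 : s⁻¹ ≤ a⁻¹ := inv_anti₀ ha has
  have h2 : s ^ ((2:ℝ) - (N:ℝ)) ≤ a ^ ((2:ℝ) - (N:ℝ)) :=
    Real.rpow_le_rpow_of_nonpos ha has (by linarith)
  have h3 := hProfile_abs_le hN hu hs
  exact mul_le_mul h1 (mul_le_mul h2 h3 (abs_nonneg _) (Real.rpow_pos_of_pos ha _).le)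
    (by positivity) (inv_nonneg.2 ha.le)

lemma intg (N : ℕ) (hN : 3 ≤ N) {u a : ℝ} (hu : 0 ≤ u) (ha : 0 < a) {c d : ℝ}
    (hac : a ≤ c) (hcd : c ≤ d) :
    IntervalIntegrable (fun s => s⁻¹ * (s ^ ((2:ℝ) - (N:ℝ)) * hProfile N u s)) volume c d := by
  rw [intervalIntegrable_iff_integrableOn_Ioc_of_le hcd]
  apply Measure.integrableOn_of_bounded
    (M := a⁻¹ * (a ^ ((2:ℝ) - (N:ℝ)) * (((N:ℝ) - 1) * ((N:ℝ) - 2) / ((2:ℝ) ^ (N - 1) - 1))))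
    measure_Ioc_lt_top.ne
  · apply Measurable.aestronglyMeasurable
    have hm : Measurable fun s : ℝ => hProfile N u s :=
      (measurable_hProfile N).comp (measurable_const.prodMk measurable_id)
    have hr : Measurable fun s : ℝ => s ^ ((2:ℝ) - (N:ℝ)) := by measurability
    exact measurable_inv.mul (hr.mul hm)
  · filter_upwards [ae_restrict_mem measurableSet_Ioc] with s hs
    rw [Real.norm_eq_abs]
    exact F_abs_le N hN hu ha (hac.trans hs.1.le)

set_option maxHeartbeats 2000000 in
lemma key (N : ℕ) (hN : 3 ≤ N) {a b u : ℝ} (ha : 0 < a) (hb : 0 < b) (hab : 2 * a ≤ b)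
    (hu : 0 ≤ u) :
    lProfile N a b u * u ^ ((2:ℝ) - (N:ℝ))
      = (∫ s in a..b, s⁻¹ * (s ^ ((2:ℝ) - (N:ℝ)) * hProfile N u s))
        + ((N:ℝ) - 2)⁻¹ * (b ^ ((2:ℝ) - (N:ℝ)) * hProfile N u b
            - a ^ ((2:ℝ) - (N:ℝ)) * hProfile N u a) := by
  have hn : (3:ℝ) ≤ (N:ℝ) := by exact_mod_cast hN
  have hQne := (Qpos hN).ne'
  have hab' : a ≤ b := by linarith
  have h2n : (2:ℝ) - (N:ℝ) ≠ 0 := by intro h; linarith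
  have h1n : (1:ℝ) - (N:ℝ) ≠ 0 := by intro h; linarith
  have hn2 : (N:ℝ) - 2 ≠ 0 := by intro h; linarith
  rcases le_or_gt u a with hA | hA
  · -- u ≤ a
    rw [piece_one N hN hu ha hab' hA]
    have hhb : hProfile N u b = ((N:ℝ) - 1) * ((N:ℝ) - 2) / ((2:ℝ) ^ (N - 1) - 1) * 1 := by
      unfold hProfile; rw [if_pos (hA.trans hab')]
    have hha : hProfile N u a = ((N:ℝ) - 1) * ((N:ℝ) - 2) / ((2:ℝ) ^ (N - 1) - 1) * 1 := by
      unfold hProfile; rw [if_pos hA]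
    have hl : lProfile N a b u = 0 := by unfold lProfile; rw [if_pos hA]
    rw [hhb, hha, hl]
    field_simp
    ring
  rcases le_or_gt u (2 * a) with hB | hB
  · -- a < u ≤ 2a
    have hu0 : 0 < u := ha.trans hA
    have hub : u ≤ b := hB.trans hab
    rw [← intervalIntegral.integral_add_adjacent_intervals
      (intg N hN hu ha (le_refl a) hA.le) (intg N hN hu ha hA.le hub)]
    rw [piece_two N hN hu ha hA.le hB (le_refl u),
      piece_one N hN hu hu0 hub (le_refl u)]
    have hhb : hProfile N u b = ((N:ℝ) - 1) * ((N:ℝ) - 2) / ((2:ℝ) ^ (N - 1) - 1) * 1 := by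
      unfold hProfile; rw [if_pos hub]
    have hha : hProfile N u a
        = ((N:ℝ) - 1) * ((N:ℝ) - 2) / ((2:ℝ) ^ (N - 1) - 1) * (2 - u / a) := by
      unfold hProfile; rw [if_neg (not_le.2 hA), if_pos hB]
    have hl : lProfile N a b u
        = ((u / a) ^ (N - 1) - 1) / ((2:ℝ) ^ (N - 1) - 1) := by
      unfold lProfile; rw [if_neg (not_le.2 hA), if_pos hB]
    rw [hhb, hha, hl, div_natpow_eq hN hu0 ha, rpow_two_sub hu0, rpow_two_sub ha,
      rpow_two_sub hb]
    have hU1 : u ^ ((1:ℝ) - (N:ℝ)) ≠ 0 := (Real.rpow_pos_of_pos hu0 _).ne'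
    have hA1 : a ^ ((1:ℝ) - (N:ℝ)) ≠ 0 := (Real.rpow_pos_of_pos ha _).ne'
    field_simp
    ring
  rcases le_or_gt u b with hC | hC
  · -- 2a < u ≤ b
    have hu0 : 0 < u := by linarith
    have hu20 : 0 < u / 2 := by linarith
    have hau2 : a ≤ u / 2 := by linarith
    have hu2u : u / 2 ≤ u := by linarith
    rw [← intervalIntegral.integral_add_adjacent_intervals
      (intg N hN hu ha (le_refl a) hau2)
      (intg N hN hu ha hau2 (hu2u.trans hC))]
    rw [← intervalIntegral.integral_add_adjacent_intervals
      (intg N hN hu ha hau2 hu2u) (intg N hN hu ha (hau2.trans hu2u) hC)]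
    rw [piece_zero N ha hau2 (by linarith), piece_two N hN hu hu20 hu2u (by linarith) (le_refl u),
      piece_one N hN hu hu0 hC (le_refl u)]
    have hhb : hProfile N u b = ((N:ℝ) - 1) * ((N:ℝ) - 2) / ((2:ℝ) ^ (N - 1) - 1) * 1 := by
      unfold hProfile; rw [if_pos hC]
    have hha : hProfile N u a = ((N:ℝ) - 1) * ((N:ℝ) - 2) / ((2:ℝ) ^ (N - 1) - 1) * 0 := by
      unfold hProfile; rw [if_neg (by linarith : ¬ u ≤ a), if_neg (not_le.2 hB)]
    have hl : lProfile N a b u = 1 := by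
      unfold lProfile; rw [if_neg (by linarith : ¬ u ≤ a), if_neg (not_le.2 hB), if_pos hC]
    rw [hhb, hha, hl, rpow_two_sub hu0, rpow_two_sub hb, rpow_two_sub hu20,
      half_rpow hN hu0]
    field_simp
    ring
  rcases le_or_gt u (2 * b) with hD | hD
  · -- b < u ≤ 2b
    have hu0 : 0 < u := by linarith
    have hu20 : 0 < u / 2 := by linarith
    have hau2 : a ≤ u / 2 := by linarith
    have hu2b : u / 2 ≤ b := by linarith
    rw [← intervalIntegral.integral_add_adjacent_intervals
      (intg N hN hu ha (le_refl a) hau2) (intg N hN hu ha hau2 hu2b)]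
    rw [piece_zero N ha hau2 (by linarith),
      piece_two N hN hu hu20 hu2b (by linarith) hC.le]
    have hhb : hProfile N u b
        = ((N:ℝ) - 1) * ((N:ℝ) - 2) / ((2:ℝ) ^ (N - 1) - 1) * (2 - u / b) := by
      unfold hProfile; rw [if_neg (not_le.2 hC), if_pos hD]
    have hha : hProfile N u a = ((N:ℝ) - 1) * ((N:ℝ) - 2) / ((2:ℝ) ^ (N - 1) - 1) * 0 := by
      unfold hProfile; rw [if_neg (by linarith : ¬ u ≤ a), if_neg (by linarith : ¬ u ≤ 2 * a)]
    have hl : lProfile N a b u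
        = ((2:ℝ) ^ (N - 1) - (u / b) ^ (N - 1)) / ((2:ℝ) ^ (N - 1) - 1) := by
      unfold lProfile
      rw [if_neg (by linarith : ¬ u ≤ a), if_neg (by linarith : ¬ u ≤ 2 * a),
        if_neg (not_le.2 hC), if_pos hD]
    rw [hhb, hha, hl, div_natpow_eq hN hu0 hb, rpow_two_sub hu0, rpow_two_sub hb,
      rpow_two_sub hu20, half_rpow hN hu0]
    have hU1 : u ^ ((1:ℝ) - (N:ℝ)) ≠ 0 := (Real.rpow_pos_of_pos hu0 _).ne'
    have hB1 : b ^ ((1:ℝ) - (N:ℝ)) ≠ 0 := (Real.rpow_pos_of_pos hb _).ne'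
    field_simp
    ring
  · -- 2b < u
    rw [piece_zero N ha hab' (by linarith)]
    have hhb : hProfile N u b = ((N:ℝ) - 1) * ((N:ℝ) - 2) / ((2:ℝ) ^ (N - 1) - 1) * 0 := by
      unfold hProfile; rw [if_neg (by linarith : ¬ u ≤ b), if_neg (not_le.2 hD)]
    have hha : hProfile N u a = ((N:ℝ) - 1) * ((N:ℝ) - 2) / ((2:ℝ) ^ (N - 1) - 1) * 0 := by
      unfold hProfile; rw [if_neg (by linarith : ¬ u ≤ a), if_neg (by linarith : ¬ u ≤ 2 * a)]
    have hl : lProfile N a b u = 0 := by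
      unfold lProfile
      rw [if_neg (by linarith : ¬ u ≤ a), if_neg (by linarith : ¬ u ≤ 2 * a),
        if_neg (by linarith : ¬ u ≤ b), if_neg (not_le.2 hD)]
    rw [hhb, hha, hl]
    ring

end Stmt15

set_option maxHeartbeats 2000000 in
/-- Integral representation of the truncated Riesz-type weight: for `N ≥ 3`, `0 < a`,
`2a ≤ b`, and `k ∈ L¹(B_{2b}(0))`,
`∫_{B_{2b}} l(|y|)|y|^{2−N}k(y) dy = ∫_a^b s⁻¹·J_s ds + (N−2)⁻¹(J_b − J_a)`,
where `J_s := s^{2−N}∫_{B_{2s}} k(y)·h(|y|,s) dy`. -/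
theorem stmt_15 (N : ℕ) (hN : 3 ≤ N) (a b : ℝ) (ha : 0 < a) (hb : 0 < b) (hab : 2 * a ≤ b)
    (k : EuclideanSpace ℝ (Fin N) → ℝ)
    (hk : IntegrableOn k (Metric.ball (0 : EuclideanSpace ℝ (Fin N)) (2 * b)))
    (J : ℝ → ℝ)
    (hJ : ∀ s : ℝ, J s = s ^ ((2 : ℝ) - N) *
      ∫ y in Metric.ball (0 : EuclideanSpace ℝ (Fin N)) (2 * s), k y * hProfile N ‖y‖ s) :
    (∫ y in Metric.ball (0 : EuclideanSpace ℝ (Fin N)) (2 * b),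
        lProfile N a b ‖y‖ * ‖y‖ ^ ((2 : ℝ) - N) * k y)
      = (∫ s in a..b, s⁻¹ * J s) + ((N : ℝ) - 2)⁻¹ * (J b - J a) := by
  classical
  have hn : (3:ℝ) ≤ (N:ℝ) := by exact_mod_cast hN
  have hab' : a ≤ b := by linarith
  have hCnn := Stmt15.Cv_nonneg hN
  -- joint measurability of the kernel factor
  have hFmeas : Measurable fun p : ℝ × EuclideanSpace ℝ (Fin N) =>
      p.1⁻¹ * (p.1 ^ ((2:ℝ) - (N:ℝ)) * hProfile N ‖p.2‖ p.1) := by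
    have h1 : Measurable fun p : ℝ × EuclideanSpace ℝ (Fin N) => hProfile N ‖p.2‖ p.1 :=
      (Stmt15.measurable_hProfile N).comp
        ((measurable_norm.comp measurable_snd).prodMk measurable_fst)
    have h2 : Measurable fun p : ℝ × EuclideanSpace ℝ (Fin N) => p.1 ^ ((2:ℝ) - (N:ℝ)) := by
      measurability
    exact measurable_fst.inv.mul (h2.mul h1)
  -- integrability of k·h(‖·‖, s) for fixed positive s
  have hkh : ∀ s : ℝ, 0 < s → Integrable (fun y => k y * hProfile N ‖y‖ s)
      (volume.restrict (Metric.ball (0 : EuclideanSpace ℝ (Fin N)) (2 * b))) := by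
    intro s hs
    have hm : AEStronglyMeasurable (fun y : EuclideanSpace ℝ (Fin N) => hProfile N ‖y‖ s)
        (volume.restrict (Metric.ball (0 : EuclideanSpace ℝ (Fin N)) (2 * b))) :=
      ((Stmt15.measurable_hProfile N).comp
        (measurable_norm.prodMk measurable_const)).aestronglyMeasurable
    have hbd : ∃ C, ∀ y : EuclideanSpace ℝ (Fin N), ‖hProfile N ‖y‖ s‖ ≤ C :=
      ⟨_, fun y => by
        rw [Real.norm_eq_abs]
        exact Stmt15.hProfile_abs_le hN (norm_nonneg y) hs⟩
    exact (hk.bdd_mul hm (Filter.Eventually.of_forall hbd.choose_spec)).congr (Filter.Eventually.of_forall fun y => mul_comm _ _)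
  -- shrinking the ball
  have hshrink : ∀ s : ℝ, 0 < s → s ≤ b →
      (∫ y in Metric.ball (0 : EuclideanSpace ℝ (Fin N)) (2 * b), k y * hProfile N ‖y‖ s)
        = ∫ y in Metric.ball (0 : EuclideanSpace ℝ (Fin N)) (2 * s),
            k y * hProfile N ‖y‖ s := by
    intro s hs hsb
    have hpt : ∀ y : EuclideanSpace ℝ (Fin N), k y * hProfile N ‖y‖ s
        = (Metric.ball (0 : EuclideanSpace ℝ (Fin N)) (2 * s)).indicator
            (fun y => k y * hProfile N ‖y‖ s) y := by
      intro y
      by_cases hy : y ∈ Metric.ball (0 : EuclideanSpace ℝ (Fin N)) (2 * s)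
      · rw [Set.indicator_of_mem hy]
      · rw [Set.indicator_of_notMem hy]
        have h2s : 2 * s ≤ ‖y‖ := not_lt.1 (by simpa [mem_ball_zero_iff] using hy)
        rw [Stmt15.hProfile_eq_zero hs h2s, mul_zero]
    calc ∫ y in Metric.ball (0 : EuclideanSpace ℝ (Fin N)) (2 * b), k y * hProfile N ‖y‖ s
        = ∫ y in Metric.ball (0 : EuclideanSpace ℝ (Fin N)) (2 * b),
            (Metric.ball (0 : EuclideanSpace ℝ (Fin N)) (2 * s)).indicator
              (fun y => k y * hProfile N ‖y‖ s) y :=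
          integral_congr_ae (Filter.Eventually.of_forall fun y => hpt y)
      _ = ∫ y in Metric.ball (0 : EuclideanSpace ℝ (Fin N)) (2 * b)
            ∩ Metric.ball (0 : EuclideanSpace ℝ (Fin N)) (2 * s),
            k y * hProfile N ‖y‖ s := setIntegral_indicator Metric.isOpen_ball.measurableSet
      _ = _ := by
          rw [Set.inter_eq_self_of_subset_right (Metric.ball_subset_ball (by linarith))]
  -- pointwise identity
  have hpt : ∀ y : EuclideanSpace ℝ (Fin N),
      lProfile N a b ‖y‖ * ‖y‖ ^ ((2:ℝ) - (N:ℝ)) * k y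
        = ((∫ s in a..b, s⁻¹ * (s ^ ((2:ℝ) - (N:ℝ)) * hProfile N ‖y‖ s))
            + ((N:ℝ) - 2)⁻¹ * (b ^ ((2:ℝ) - (N:ℝ)) * hProfile N ‖y‖ b
                - a ^ ((2:ℝ) - (N:ℝ)) * hProfile N ‖y‖ a)) * k y := by
    intro y
    rw [← Stmt15.key N hN ha hb hab (norm_nonneg y)]
  simp only [hpt]
  simp only [intervalIntegral.integral_of_le hab']
  simp only [add_mul]
  -- product integrability for Fubini
  have hprod : Integrable
      (Function.uncurry fun s (y : EuclideanSpace ℝ (Fin N)) =>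
        (s⁻¹ * (s ^ ((2:ℝ) - (N:ℝ)) * hProfile N ‖y‖ s)) * k y)
      ((volume.restrict (Set.Ioc a b)).prod
        (volume.restrict (Metric.ball (0 : EuclideanSpace ℝ (Fin N)) (2 * b)))) := by
    have hgint : Integrable
        (fun z : ℝ × EuclideanSpace ℝ (Fin N) =>
          (a⁻¹ * (a ^ ((2:ℝ) - (N:ℝ)) * (((N:ℝ) - 1) * ((N:ℝ) - 2) / ((2:ℝ) ^ (N - 1) - 1))))
            * ‖k z.2‖)
        ((volume.restrict (Set.Ioc a b)).prod
          (volume.restrict (Metric.ball (0 : EuclideanSpace ℝ (Fin N)) (2 * b)))) := by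
      apply Integrable.const_mul
      rw [integrable_prod_iff (hk.norm.aestronglyMeasurable.comp_snd)]
      constructor
      · exact Filter.Eventually.of_forall fun s => hk.norm
      · have hc : IntegrableOn
            (fun _ : ℝ => ∫ y in Metric.ball (0 : EuclideanSpace ℝ (Fin N)) (2 * b), ‖‖k y‖‖)
            (Set.Ioc a b) volume :=
          integrableOn_const measure_Ioc_lt_top.ne
        exact hc.congr (Filter.Eventually.of_forall fun x => rfl)
    apply hgint.mono'
    · exact (hFmeas.aestronglyMeasurable.mul (hk.aestronglyMeasurable.comp_snd))
    · rw [Measure.prod_restrict]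
      filter_upwards [ae_restrict_mem (measurableSet_Ioc.prod
        Metric.isOpen_ball.measurableSet)] with z hz
      obtain ⟨hz1, -⟩ := hz
      rw [Function.uncurry, Real.norm_eq_abs, abs_mul]
      exact mul_le_mul_of_nonneg_right
        (Stmt15.F_abs_le N hN (norm_nonneg z.2) ha hz1.1.le)
        (abs_nonneg _)
  -- integrability of the two summands in y
  have hI1 : Integrable
      (fun y : EuclideanSpace ℝ (Fin N) =>
        (∫ s in Set.Ioc a b, s⁻¹ * (s ^ ((2:ℝ) - (N:ℝ)) * hProfile N ‖y‖ s)) * k y)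
      (volume.restrict (Metric.ball (0 : EuclideanSpace ℝ (Fin N)) (2 * b))) := by
    apply hk.bdd_mul
    · exact (hFmeas.stronglyMeasurable.integral_prod_left').aestronglyMeasurable
    · refine (Filter.Eventually.of_forall fun y => ?_ : ∀ᵐ y ∂(volume.restrict (Metric.ball (0 : EuclideanSpace ℝ (Fin N)) (2 * b))), ‖(_ : ℝ)‖ ≤ (a⁻¹ * (a ^ ((2:ℝ) - (N:ℝ))
        * (((N:ℝ) - 1) * ((N:ℝ) - 2) / ((2:ℝ) ^ (N - 1) - 1))))
        * (volume (Set.Ioc a b)).toReal)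
      apply norm_setIntegral_le_of_norm_le_const measure_Ioc_lt_top
      · intro s hs
        rw [Real.norm_eq_abs]
        exact Stmt15.F_abs_le N hN (norm_nonneg y) ha hs.1.le
  have hI2 : Integrable
      (fun y : EuclideanSpace ℝ (Fin N) =>
        (((N:ℝ) - 2)⁻¹ * (b ^ ((2:ℝ) - (N:ℝ)) * hProfile N ‖y‖ b
          - a ^ ((2:ℝ) - (N:ℝ)) * hProfile N ‖y‖ a)) * k y)
      (volume.restrict (Metric.ball (0 : EuclideanSpace ℝ (Fin N)) (2 * b))) := by
    apply hk.bdd_mul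
    · apply Measurable.aestronglyMeasurable
      have h1 : Measurable fun y : EuclideanSpace ℝ (Fin N) => hProfile N ‖y‖ b :=
        (Stmt15.measurable_hProfile N).comp (measurable_norm.prodMk measurable_const)
      have h2 : Measurable fun y : EuclideanSpace ℝ (Fin N) => hProfile N ‖y‖ a :=
        (Stmt15.measurable_hProfile N).comp (measurable_norm.prodMk measurable_const)
      exact measurable_const.mul ((measurable_const.mul h1).sub (measurable_const.mul h2))
    · refine (Filter.Eventually.of_forall fun y => ?_ : ∀ᵐ y ∂(volume.restrict (Metric.ball (0 : EuclideanSpace ℝ (Fin N)) (2 * b))), ‖(_ : ℝ)‖ ≤ |((N:ℝ) - 2)⁻¹| * (b ^ ((2:ℝ) - (N:ℝ))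
        * (((N:ℝ) - 1) * ((N:ℝ) - 2) / ((2:ℝ) ^ (N - 1) - 1))
        + a ^ ((2:ℝ) - (N:ℝ))
        * (((N:ℝ) - 1) * ((N:ℝ) - 2) / ((2:ℝ) ^ (N - 1) - 1))))
      rw [Real.norm_eq_abs, abs_mul]
      apply mul_le_mul_of_nonneg_left _ (abs_nonneg _)
      calc |b ^ ((2:ℝ) - (N:ℝ)) * hProfile N ‖y‖ b
            - a ^ ((2:ℝ) - (N:ℝ)) * hProfile N ‖y‖ a|
          ≤ |b ^ ((2:ℝ) - (N:ℝ)) * hProfile N ‖y‖ b|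
            + |a ^ ((2:ℝ) - (N:ℝ)) * hProfile N ‖y‖ a| := abs_sub _ _
        _ ≤ _ := by
            rw [abs_mul, abs_mul, abs_of_pos (Real.rpow_pos_of_pos hb _),
              abs_of_pos (Real.rpow_pos_of_pos ha _)]
            have e1 := Stmt15.hProfile_abs_le hN (norm_nonneg y) hb
            have e2 := Stmt15.hProfile_abs_le hN (norm_nonneg y) ha
            have p1 := (Real.rpow_pos_of_pos hb ((2:ℝ) - (N:ℝ))).le
            have p2 := (Real.rpow_pos_of_pos ha ((2:ℝ) - (N:ℝ))).le
            exact add_le_add (mul_le_mul_of_nonneg_left e1 p1)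
              (mul_le_mul_of_nonneg_left e2 p2)
  rw [integral_add hI1 hI2]
  -- second summand
  have hPart2 : (∫ y in Metric.ball (0 : EuclideanSpace ℝ (Fin N)) (2 * b),
      (((N:ℝ) - 2)⁻¹ * (b ^ ((2:ℝ) - (N:ℝ)) * hProfile N ‖y‖ b
        - a ^ ((2:ℝ) - (N:ℝ)) * hProfile N ‖y‖ a)) * k y)
      = ((N:ℝ) - 2)⁻¹ * (J b - J a) := by
    have hpt2 : ∀ y : EuclideanSpace ℝ (Fin N),
        (((N:ℝ) - 2)⁻¹ * (b ^ ((2:ℝ) - (N:ℝ)) * hProfile N ‖y‖ b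
          - a ^ ((2:ℝ) - (N:ℝ)) * hProfile N ‖y‖ a)) * k y
        = (((N:ℝ) - 2)⁻¹ * b ^ ((2:ℝ) - (N:ℝ))) * (k y * hProfile N ‖y‖ b)
          - (((N:ℝ) - 2)⁻¹ * a ^ ((2:ℝ) - (N:ℝ))) * (k y * hProfile N ‖y‖ a) := by
      intro y; ring
    simp only [hpt2]
    rw [integral_sub ((hkh b hb).const_mul _) ((hkh a ha).const_mul _),
      integral_const_mul, integral_const_mul, hshrink b hb le_rfl,
      hshrink a ha (by linarith), hJ b, hJ a]
    ring
  -- first summand via Fubini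
  have hPart1 : (∫ y in Metric.ball (0 : EuclideanSpace ℝ (Fin N)) (2 * b),
      (∫ s in Set.Ioc a b, s⁻¹ * (s ^ ((2:ℝ) - (N:ℝ)) * hProfile N ‖y‖ s)) * k y)
      = ∫ s in Set.Ioc a b, s⁻¹ * J s := by
    have hstep : (∫ y in Metric.ball (0 : EuclideanSpace ℝ (Fin N)) (2 * b),
        (∫ s in Set.Ioc a b, s⁻¹ * (s ^ ((2:ℝ) - (N:ℝ)) * hProfile N ‖y‖ s)) * k y)
        = ∫ y in Metric.ball (0 : EuclideanSpace ℝ (Fin N)) (2 * b),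
            ∫ s in Set.Ioc a b,
              (s⁻¹ * (s ^ ((2:ℝ) - (N:ℝ)) * hProfile N ‖y‖ s)) * k y :=
      integral_congr_ae (Filter.Eventually.of_forall fun y =>
        (integral_mul_const (k y) _).symm)
    rw [hstep, ← integral_integral_swap hprod]
    apply setIntegral_congr_fun measurableSet_Ioc
    intro s hs
    have hs0 : 0 < s := ha.trans hs.1
    have hpt3 : ∀ y : EuclideanSpace ℝ (Fin N),
        (s⁻¹ * (s ^ ((2:ℝ) - (N:ℝ)) * hProfile N ‖y‖ s)) * k y
          = (s⁻¹ * s ^ ((2:ℝ) - (N:ℝ))) * (k y * hProfile N ‖y‖ s) := by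
      intro y; ring
    simp only [hpt3]
    rw [integral_const_mul, hshrink s hs0 hs.2, hJ s]
    ring
  rw [hPart1, hPart2]
end
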